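/- Any normal vertex of finite height in a quiver is phylogenetic: if X is normal and h(X) < ∞, then there exists a universal evolution for X. -/

import Mathlib

universe u
variable {V : Type u} [Quiver V]

/-- An evolution of length `m` with vertex sequence `A 0, A 1, ..., A m`:
for each `k < m` there is an edge from `A (k+1)` to `A k`
(the paper's evolution `A 0 ← A 1 ← ⋯ ← A m`). -/
def IsEvol (A : ℕ → V) (m : ℕ) : Prop := ∀ k < m, Nonempty (A (k + 1) ⟶ A k)

/-- `Anc X Y` : `X` is an ancestor of `Y`, i.e. there is an evolution from `X` to `Y`. -/
def Anc (X Y : V) : Prop := ∃ (m : ℕ) (A : ℕ → V), IsEvol A m ∧ A 0 = X ∧ A m = Y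

/-- `X` and `Y` are isotypic. -/
def Isotypic (X Y : V) : Prop := Anc X Y ∧ Anc Y X

/-- A vertex is primitive if every ancestor of it is isotypic to it. -/
def Primitive (X : V) : Prop := ∀ B : V, Anc B X → Anc X B

/-- A full evolution for `X` : an evolution from a primitive vertex to `X`. -/
def IsFullEvol (A : ℕ → V) (m : ℕ) (X : V) : Prop :=
  IsEvol A m ∧ Primitive (A 0) ∧ A m = X

/-- The height of a vertex: the least length of a full evolution for it (`⊤` if none). -/
noncomputable def height (X : V) : ℕ∞ :=
  sInf {n : ℕ∞ | ∃ m : ℕ, n = (m : ℕ∞) ∧ ∃ A : ℕ → V, IsFullEvol A m X}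

/-- `A` is a critical ancestor of `B`. -/
def CritAnc (A B : V) : Prop :=
  height A < ⊤ ∧ ∃ (m : ℕ) (E : ℕ → V), 0 < m ∧ IsEvol E m ∧ E 0 = A ∧ E m = B ∧
    height (E 1) = height A + 1

/-- A vertex is normal if any two of its critical ancestors of equal height are isotypic. -/
def NormalVtx (B : V) : Prop :=
  ∀ A A' : V, CritAnc A B → CritAnc A' B → height A = height A' → Isotypic A A'

/-- The evolution `(A, m)` embeds in the evolution `(B, n)`. -/
def Embeds (A : ℕ → V) (m : ℕ) (B : ℕ → V) (n : ℕ) : Prop :=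
  m ≤ n ∧ ∃ r : ℕ → ℕ, (∀ k < m, r k < r (k + 1)) ∧ r m ≤ n ∧
    ∀ k ≤ m, Isotypic (A k) (B (r k))

/-- A universal evolution for `X`: a full evolution for `X` embedding in every
full evolution for `X`. -/
def IsUniversalEvol (A : ℕ → V) (m : ℕ) (X : V) : Prop :=
  IsFullEvol A m X ∧ ∀ (B : ℕ → V) (n : ℕ), IsFullEvol B n X → Embeds A m B n

/-- A vertex is phylogenetic if it admits a universal evolution. -/
def Phylogenetic (X : V) : Prop := ∃ (A : ℕ → V) (m : ℕ), IsUniversalEvol A m X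

/-- A quiver is monotonous if `h(A) ≥ h(B)` for every edge `A → B`. -/
def Monotonous (V : Type u) [Quiver V] : Prop :=
  ∀ A B : V, Nonempty (A ⟶ B) → height B ≤ height A

/-- A vertex `A` is regular if for every descendant `B` of `A` with `h(B) = h(A)`
there is an edge `B → A`. -/
def Regular (A : V) : Prop :=
  ∀ B : V, Anc A B → height B = height A → Nonempty (B ⟶ A)

/-- The clade of a vertex `A`: the full subquiver of descendants of `A`. -/
abbrev Clade (A : V) : Type u := {B : V // Anc A B}

instance (A : V) : Quiver (Clade A) := ⟨fun X Y => X.val ⟶ Y.val⟩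

-- AUX START
lemma enat_sandwich {k : ℕ} {x : ℕ∞} (h1 : (k:ℕ∞) < x) (h2 : x ≤ (k:ℕ∞) + 1) :
    x = (k:ℕ∞) + 1 := by
  have hc : ((k:ℕ∞) + 1) = ((k+1 : ℕ) : ℕ∞) := by push_cast; ring
  rw [hc] at h2 ⊢
  have hx : x ≠ ⊤ := ne_top_of_le_ne_top (ENat.coe_ne_top _) h2
  lift x to ℕ using hx
  have h1' : k < x := by exact_mod_cast h1
  have h2' : x ≤ k + 1 := by exact_mod_cast h2
  exact_mod_cast (by omega : x = k + 1)

lemma enat_pred {k : ℕ} {x : ℕ∞} (h1 : x ≤ (k:ℕ∞)) (h2 : (k:ℕ∞)+1 ≤ x+1) :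
    x = (k:ℕ∞) := by
  have hx : x ≠ ⊤ := ne_top_of_le_ne_top (ENat.coe_ne_top _) h1
  lift x to ℕ using hx
  have h1' : x ≤ k := by exact_mod_cast h1
  have h2' : k + 1 ≤ x + 1 := by exact_mod_cast h2
  exact_mod_cast (by omega : x = k)

lemma anc_refl (X : V) : Anc X X :=
  ⟨0, fun _ => X, fun k hk => absurd hk (Nat.not_lt_zero k), rfl, rfl⟩

lemma isotypic_refl (X : V) : Isotypic X X := ⟨anc_refl X, anc_refl X⟩

lemma height_le {X : V} {m : ℕ} {A : ℕ → V} (h : IsFullEvol A m X) :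
    height X ≤ (m : ℕ∞) :=
  sInf_le ⟨m, rfl, A, h⟩

lemma height_primitive {P : V} (h : Primitive P) : height P = 0 := by
  have h0 : height P ≤ ((0:ℕ) : ℕ∞) :=
    height_le (X := P) (m := 0) (A := fun _ => P)
      ⟨fun k hk => absurd hk (Nat.not_lt_zero k), h, rfl⟩
  exact le_antisymm (by simpa using h0) zero_le

lemma height_spec {X : V} (h : height X < ⊤) :
    ∃ (n : ℕ) (A : ℕ → V), IsFullEvol A n X ∧ height X = (n : ℕ∞) ∧
      ∀ (k : ℕ) (B : ℕ → V), IsFullEvol B k X → n ≤ k := by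
  classical
  have hne : ∃ m : ℕ, ∃ A : ℕ → V, IsFullEvol A m X := by
    by_contra hc
    push_neg at hc
    have he : {n : ℕ∞ | ∃ m : ℕ, n = (m : ℕ∞) ∧ ∃ A : ℕ → V, IsFullEvol A m X} = ∅ := by
      ext x
      simp only [Set.mem_setOf_eq, Set.mem_empty_iff_false, iff_false]
      rintro ⟨m, rfl, A, hA⟩
      exact hc m A hA
    rw [height, he, sInf_empty] at h
    exact lt_irrefl _ h
  obtain ⟨m0, A0, hm0⟩ := hne
  have hS : {m : ℕ | ∃ A : ℕ → V, IsFullEvol A m X}.Nonempty := ⟨m0, A0, hm0⟩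
  obtain ⟨A, hA⟩ := Nat.sInf_mem hS
  refine ⟨sInf {m : ℕ | ∃ A : ℕ → V, IsFullEvol A m X}, A, hA, ?_,
    fun k B hB => Nat.sInf_le
      (show k ∈ {m : ℕ | ∃ A : ℕ → V, IsFullEvol A m X} from ⟨B, hB⟩)⟩
  refine le_antisymm (height_le hA) (le_sInf ?_)
  rintro b ⟨m, rfl, A', hA'⟩
  exact_mod_cast Nat.sInf_le
    (show m ∈ {m : ℕ | ∃ A : ℕ → V, IsFullEvol A m X} from ⟨A', hA'⟩)

lemma height_le_succ {A B : V} (e : Nonempty (B ⟶ A)) : height B ≤ height A + 1 := by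
  by_cases hA : height A < ⊤
  · obtain ⟨n, E, hE, hn, -⟩ := height_spec hA
    have hfull : IsFullEvol (fun j => if j ≤ n then E j else B) (n + 1) B := by
      refine ⟨?_, ?_, ?_⟩
      · intro k hk
        rcases Nat.lt_or_ge k n with h | h
        · have h1 : k + 1 ≤ n := h
          have h2 : k ≤ n := Nat.le_of_lt h
          simpa only [if_pos h1, if_pos h2] using hE.1 k h
        · have hk' : k = n := by omega
          subst hk'
          have h1 : ¬ (k + 1 ≤ k) := by omega
          simp only [if_neg h1, if_pos (le_refl k)]
          rw [hE.2.2]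
          exact e
      · simp only [if_pos (Nat.zero_le n)]
        exact hE.2.1
      · simp only [if_neg (by omega : ¬ (n + 1 ≤ n))]
    calc height B ≤ ((n + 1 : ℕ) : ℕ∞) := height_le hfull
      _ = height A + 1 := by rw [hn]; push_cast; ring
  · push_neg at hA
    have : height A = ⊤ := top_le_iff.mp hA
    rw [this]
    simp

lemma height_on_short {X : V} {n : ℕ} {C : ℕ → V} (hC : IsFullEvol C n X)
    (hmin : ∀ (p : ℕ) (B : ℕ → V), IsFullEvol B p X → n ≤ p) {k : ℕ} (hk : k ≤ n) :
    height (C k) = (k : ℕ∞) := by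
  have hup : height (C k) ≤ (k : ℕ∞) :=
    height_le ⟨fun l hl => hC.1 l (by omega), hC.2.1, rfl⟩
  obtain ⟨p, D, hD, hp, -⟩ := height_spec (lt_of_le_of_lt hup (ENat.coe_lt_top k))
  have hfull : IsFullEvol (fun j => if j < p then D j else C (k + (j - p))) (p + (n - k)) X := by
    refine ⟨?_, ?_, ?_⟩
    · intro l hl
      rcases Nat.lt_or_ge (l + 1) p with h | h
      · have h2 : l < p := by omega
        simpa only [if_pos h, if_pos h2] using hD.1 l h2
      · rcases Nat.lt_or_ge l p with h2 | h2
        · have hle : l + 1 = p := by omega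
          have e1 : (if l + 1 < p then D (l+1) else C (k + (l + 1 - p))) = C k := by
            rw [if_neg (by omega), hle, Nat.sub_self, Nat.add_zero]
          have e2 : (if l < p then D l else C (k + (l - p))) = D l := if_pos h2
          simp only [e1, e2]
          rw [← hD.2.2, ← hle]
          exact hD.1 l (by omega)
        · have e1 : (if l + 1 < p then D (l+1) else C (k + (l + 1 - p))) =
              C ((k + (l - p)) + 1) := by
            rw [if_neg (by omega)]
            congr 1
            omega
          have e2 : (if l < p then D l else C (k + (l - p))) = C (k + (l - p)) :=
            if_neg (by omega)
          simp only [e1, e2]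
          exact hC.1 (k + (l - p)) (by omega)
    · show Primitive (if 0 < p then D 0 else C (k + (0 - p)))
      rcases Nat.eq_zero_or_pos p with h | h
      · subst h
        rw [if_neg (lt_irrefl 0)]
        simp only [Nat.sub_zero, Nat.add_zero]
        rw [← hD.2.2]
        exact hD.2.1
      · rw [if_pos h]
        exact hD.2.1
    · show (if p + (n - k) < p then D (p + (n - k)) else C (k + (p + (n - k) - p))) = X
      rw [if_neg (by omega : ¬ (p + (n - k) < p))]
      rw [show k + (p + (n - k) - p) = n from by omega]
      exact hC.2.2
  have hnle := hmin _ _ hfull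
  have hpk : p ≤ k := by
    rw [hp] at hup
    exact_mod_cast hup
  rw [hp]
  exact_mod_cast (by omega : p = k)
-- AUX END

theorem stmt_7 (X : V) (h1 : NormalVtx X) (h2 : height X < ⊤) : Phylogenetic X := by
  classical
  obtain ⟨n, C, hC, hn, hmin⟩ := height_spec h2
  refine ⟨C, n, hC, ?_⟩
  intro B N hB
  have hnN : n ≤ N := hmin N B hB
  have hBN : height (B N) = (n : ℕ∞) := by rw [hB.2.2, hn]
  have hB0 : height (B 0) = 0 := height_primitive hB.2.1
  set J : ℕ → ℕ := fun k => Nat.findGreatest (fun j => height (B j) ≤ (k : ℕ∞)) N with hJdef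
  have key : ∀ k, k < n → height (B (J k)) = (k : ℕ∞) ∧ J k < N ∧
      height (B (J k + 1)) = (k : ℕ∞) + 1 ∧
      ∀ j ≤ N, height (B j) ≤ (k : ℕ∞) → j ≤ J k := by
    intro k hk
    have hP0 : height (B 0) ≤ (k : ℕ∞) := by rw [hB0]; exact zero_le
    have hspec : height (B (J k)) ≤ (k : ℕ∞) :=
      Nat.findGreatest_spec (P := fun j => height (B j) ≤ (k : ℕ∞)) (Nat.zero_le N) hP0
    have hJle : J k ≤ N := Nat.findGreatest_le N
    have hJlt : J k < N := by
      rcases Nat.lt_or_ge (J k) N with h | h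
      · exact h
      · exfalso
        have heq : J k = N := le_antisymm hJle h
        rw [heq, hBN] at hspec
        have : n ≤ k := by exact_mod_cast hspec
        omega
    have hnot : ¬ height (B (J k + 1)) ≤ (k : ℕ∞) :=
      Nat.findGreatest_is_greatest (P := fun j => height (B j) ≤ (k : ℕ∞)) (n := N)
        (Nat.lt_succ_self (J k)) (by omega)
    have hstep : height (B (J k + 1)) ≤ height (B (J k)) + 1 :=
      height_le_succ (hB.1 (J k) hJlt)
    have hlt : (k : ℕ∞) < height (B (J k + 1)) := not_le.mp hnot
    have hle1 : height (B (J k + 1)) ≤ (k : ℕ∞) + 1 :=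
      le_trans hstep (add_le_add_left hspec 1)
    have e1 : height (B (J k + 1)) = (k : ℕ∞) + 1 := enat_sandwich hlt hle1
    have e0 : height (B (J k)) = (k : ℕ∞) := by
      refine enat_pred hspec ?_
      rw [← e1]
      exact hstep
    refine ⟨e0, hJlt, e1, fun j hj hle => ?_⟩
    exact Nat.le_findGreatest hj hle
  refine ⟨hnN, fun k => if k < n then J k else N, ?_, ?_, ?_⟩
  · intro k hk
    obtain ⟨e0, hJlt, e1, -⟩ := key k hk
    rcases Nat.lt_or_ge (k + 1) n with h | h
    · simp only [if_pos hk, if_pos h]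
      have hmono : J k + 1 ≤ J (k + 1) := by
        refine (key (k + 1) h).2.2.2 (J k + 1) (by omega) ?_
        rw [e1]
        exact le_of_eq (by push_cast; ring)
      omega
    · simp only [if_pos hk, if_neg (by omega : ¬ (k + 1 < n))]
      exact hJlt
  · simp only [if_neg (lt_irrefl n)]
    exact le_refl N
  · intro k hk
    rcases Nat.lt_or_ge k n with h | h
    · simp only [if_pos h]
      have hCk : height (C k) = (k : ℕ∞) := height_on_short hC hmin (le_of_lt h)
      have hCk1 : height (C (k + 1)) = ((k + 1 : ℕ) : ℕ∞) := height_on_short hC hmin h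
      obtain ⟨e0, hJlt, e1, -⟩ := key k h
      have critC : CritAnc (C k) X := by
        refine ⟨by rw [hCk]; exact ENat.coe_lt_top k, n - k, fun j => C (k + j),
          by omega, ?_, rfl, ?_, ?_⟩
        · intro l hl
          exact hC.1 (k + l) (by omega)
        · show C (k + (n - k)) = X
          rw [show k + (n - k) = n from by omega]
          exact hC.2.2
        · show height (C (k + 1)) = height (C k) + 1
          rw [hCk1, hCk]
          push_cast
          ring
      have critB : CritAnc (B (J k)) X := by
        refine ⟨by rw [e0]; exact ENat.coe_lt_top k, N - J k, fun j => B (J k + j),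
          by omega, ?_, rfl, ?_, ?_⟩
        · intro l hl
          exact hB.1 (J k + l) (by omega)
        · show B (J k + (N - J k)) = X
          rw [show J k + (N - J k) = N from by omega]
          exact hB.2.2
        · show height (B (J k + 1)) = height (B (J k)) + 1
          rw [e1, e0]
      exact h1 (C k) (B (J k)) critC critB (by rw [hCk, e0])
    · have hkn : k = n := le_antisymm hk h
      subst hkn
      simp only [if_neg (lt_irrefl k)]
      rw [hC.2.2, hB.2.2]
      exact isotypic_refl X
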